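/- arXiv:1910.06721 — 8 statements merged into one kernel-verified Lean document; each statement's English description precedes it below -/
import Mathlib

section
/- Let G be a group and suppose there exists a natural number n such that every independent set of the power graph P(G) has at most n elements. Then the independence number of P(G) (the maximum size of an independent set) equals the clique cover number of P(G) (the minimum number of parts in a partition of the vertex set G into cliques). -/
section Dilworth

variable {α : Type*} (r : α → α → Prop)

/-- A finset all of whose elements are pairwise comparable under `r`. -/
def FChain (C : Finset α) : Prop := ∀ x ∈ C, ∀ y ∈ C, r x y ∨ r y x

/-- A finset whose distinct elements are pairwise incomparable under `r`. -/
def FAnti (T : Finset α) : Prop := ∀ x ∈ T, ∀ y ∈ T, x ≠ y → ¬(r x y ∨ r y x)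

theorem fchain_exists_greatest (htrans : ∀ x y z, r x y → r y z → r x z) :
    ∀ C : Finset α, FChain r C → C.Nonempty → ∃ m ∈ C, ∀ x ∈ C, r x m := by
  classical
  intro C
  induction C using Finset.induction_on with
  | empty => intro _ h; exact absurd h (by simp)
  | insert _ _ ha ih =>
    rename_i a C
    intro hch _
    have hchC : FChain r C := fun x hx y hy =>
      hch x (Finset.mem_insert_of_mem hx) y (Finset.mem_insert_of_mem hy)
    rcases C.eq_empty_or_nonempty with rfl | hCne
    · refine ⟨a, Finset.mem_insert_self _ _, ?_⟩
      intro x hx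
      rcases Finset.mem_insert.mp hx with rfl | hx
      · rcases hch x (Finset.mem_insert_self _ _) x (Finset.mem_insert_self _ _) with h | h <;> exact h
      · exact absurd hx (by simp)
    · obtain ⟨m, hmC, hm⟩ := ih hchC hCne
      have haa : r a a := by
        rcases hch a (Finset.mem_insert_self _ _) a (Finset.mem_insert_self _ _) with h | h <;> exact h
      rcases hch a (Finset.mem_insert_self _ _) m (Finset.mem_insert_of_mem hmC) with h | h
      · refine ⟨m, Finset.mem_insert_of_mem hmC, ?_⟩
        intro x hx
        rcases Finset.mem_insert.mp hx with rfl | hx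
        · exact h
        · exact hm x hx
      · refine ⟨a, Finset.mem_insert_self _ _, ?_⟩
        intro x hx
        rcases Finset.mem_insert.mp hx with rfl | hx
        · exact haa
        · exact htrans x m a (hm x hx) h

theorem fchain_exists_least (htrans : ∀ x y z, r x y → r y z → r x z)
    (C : Finset α) (hch : FChain r C) (hne : C.Nonempty) : ∃ m ∈ C, ∀ x ∈ C, r m x :=
  fchain_exists_greatest (fun x y => r y x) (fun x y z h1 h2 => htrans z y x h2 h1) C
    (fun x hx y hy => (hch x hx y hy).symm) hne

theorem dilworth (hrefl : ∀ x, r x x) (htrans : ∀ x y z, r x y → r y z → r x z) :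
    ∀ N : ℕ, ∀ S : Finset α, S.card ≤ N → ∀ a : ℕ,
      (∀ T ⊆ S, FAnti r T → T.card ≤ a) →
      ∃ cs : Fin a → Finset α, (∀ i, cs i ⊆ S ∧ FChain r (cs i)) ∧ ∀ x ∈ S, ∃ i, x ∈ cs i := by
  classical
  intro N
  induction N with
  | zero =>
    intro S hS a _
    have : S = ∅ := Finset.card_eq_zero.mp (Nat.le_zero.mp hS)
    subst this
    exact ⟨fun _ => ∅, fun i => ⟨by simp, fun x hx => absurd hx (by simp)⟩, fun x hx => absurd hx (by simp)⟩
  | succ N ih =>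
    intro S hS a hwidth
    rcases S.eq_empty_or_nonempty with rfl | hSne
    · exact ⟨fun _ => ∅, fun i => ⟨by simp, fun x hx => absurd hx (by simp)⟩, fun x hx => absurd hx (by simp)⟩
    obtain ⟨x0, hx0⟩ := hSne
    have ha1 : 1 ≤ a := by
      have := hwidth {x0} (by simpa using hx0) (by intro x hx y hy hne; simp at hx hy; exact absurd (hx.trans hy.symm) hne)
      simpa using this
    -- a maximum-cardinality chain in S
    have hchne : ((S.powerset).filter (fun C => FChain r C)).Nonempty :=
      ⟨∅, Finset.mem_filter.mpr ⟨Finset.empty_mem_powerset _, fun x hx => absurd hx (by simp)⟩⟩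
    obtain ⟨C, hCmem, hCmax⟩ := Finset.exists_max_image _ Finset.card hchne
    rw [Finset.mem_filter, Finset.mem_powerset] at hCmem
    obtain ⟨hCS, hCchain⟩ := hCmem
    have hCmax' : ∀ D ⊆ S, FChain r D → D.card ≤ C.card := by
      intro D hDS hDch
      exact hCmax D (Finset.mem_filter.mpr ⟨Finset.mem_powerset.mpr hDS, hDch⟩)
    have hCne : C.Nonempty := by
      rw [← Finset.card_pos]
      have : ({x0} : Finset α).card ≤ C.card := by
        apply hCmax' {x0} (by simpa using hx0)
        intro x hx y hy
        simp at hx hy; subst hx; subst hy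
        exact Or.inl (hrefl _)
      simpa using this
    have hCins : ∀ y ∈ S, y ∉ C → ¬ FChain r (insert y C) := by
      intro y hyS hyC hch
      have := hCmax' (insert y C) (Finset.insert_subset hyS hCS) hch
      rw [Finset.card_insert_of_notMem hyC] at this
      omega
    by_cases hA : ∃ T ⊆ S \ C, FAnti r T ∧ T.card = a
    · -- hard case: a full-size antichain avoiding C
      obtain ⟨A, hAsub, hAanti, hAcard⟩ := hA
      have hAS : A ⊆ S := hAsub.trans (Finset.sdiff_subset)
      -- enumerate A
      let e := A.equivFin
      let g : Fin a → α := fun i => (e.symm (Fin.cast hAcard.symm i) : α)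
      have hgA : ∀ i, g i ∈ A := fun i => (e.symm (Fin.cast hAcard.symm i)).2
      have hginj : Function.Injective g := by
        intro i j h
        have h2 : e.symm (Fin.cast hAcard.symm i) = e.symm (Fin.cast hAcard.symm j) := Subtype.ext h
        have := e.symm.injective h2
        simpa [Fin.ext_iff] using congrArg Fin.val this
      have hgsurj : ∀ x ∈ A, ∃ i, g i = x := by
        intro x hx
        refine ⟨Fin.cast hAcard (e ⟨x, hx⟩), ?_⟩
        simp [g]
      set Pm := S.filter (fun x => ∃ i, r x (g i)) with hPmdef
      set Pp := S.filter (fun x => ∃ i, r (g i) x) with hPpdef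
      have hPmS : Pm ⊆ S := Finset.filter_subset _ _
      have hPpS : Pp ⊆ S := Finset.filter_subset _ _
      have hcoverS : ∀ x ∈ S, x ∈ Pm ∨ x ∈ Pp := by
        intro x hx
        by_contra hcon
        push_neg at hcon
        obtain ⟨h1, h2⟩ := hcon
        rw [hPmdef, Finset.mem_filter] at h1
        rw [hPpdef, Finset.mem_filter] at h2
        push_neg at h1 h2
        have hn1 := h1 hx
        have hn2 := h2 hx
        have hxA : x ∉ A := by
          intro hmem
          obtain ⟨i, hi⟩ := hgsurj x hmem
          exact hn1 i (hi ▸ hrefl x)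
        have hanti : FAnti r (insert x A) := by
          intro u hu v hv hne hcomp
          rcases Finset.mem_insert.mp hu with hux | huA
          · rcases Finset.mem_insert.mp hv with hvx | hvA
            · exact hne (hux.trans hvx.symm)
            · subst hux
              obtain ⟨i, hi⟩ := hgsurj v hvA
              rcases hcomp with h | h
              · exact hn1 i (hi.symm ▸ h)
              · exact hn2 i (hi.symm ▸ h)
          · rcases Finset.mem_insert.mp hv with hvx | hvA
            · subst hvx
              obtain ⟨i, hi⟩ := hgsurj u huA
              rcases hcomp with h | h
              · exact hn2 i (hi.symm ▸ h)
              · exact hn1 i (hi.symm ▸ h)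
            · exact hAanti u huA v hvA hne hcomp
        have := hwidth (insert x A) (Finset.insert_subset hx hAS) hanti
        rw [Finset.card_insert_of_notMem hxA, hAcard] at this
        omega
      -- the greatest element of C is not in Pm
      obtain ⟨mx, hmxC, hmx⟩ := fchain_exists_greatest r htrans C hCchain hCne
      have hgC : ∀ i, g i ∉ C := fun i h => (Finset.mem_sdiff.mp (hAsub (hgA i))).2 h
      have hmPm : mx ∉ Pm := by
        intro h
        obtain ⟨-, i, hri⟩ := Finset.mem_filter.mp h
        apply hCins (g i) (hAS (hgA i)) (hgC i)
        intro u hu v hv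
        have key : ∀ c ∈ C, r c (g i) := fun c hc => htrans c mx (g i) (hmx c hc) hri
        rcases Finset.mem_insert.mp hu with hux | huC
        · subst hux
          rcases Finset.mem_insert.mp hv with hvx | hvC
          · subst hvx; exact Or.inl (hrefl _)
          · exact Or.inr (key v hvC)
        · rcases Finset.mem_insert.mp hv with hvx | hvC
          · subst hvx; exact Or.inl (key u huC)
          · exact hCchain u huC v hvC
      obtain ⟨lx, hlxC, hlx⟩ := fchain_exists_least r htrans C hCchain hCne
      have hlPp : lx ∉ Pp := by
        intro h
        obtain ⟨-, i, hri⟩ := Finset.mem_filter.mp h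
        apply hCins (g i) (hAS (hgA i)) (hgC i)
        intro u hu v hv
        have key : ∀ c ∈ C, r (g i) c := fun c hc => htrans (g i) lx c hri (hlx c hc)
        rcases Finset.mem_insert.mp hu with hux | huC
        · subst hux
          rcases Finset.mem_insert.mp hv with hvx | hvC
          · subst hvx; exact Or.inl (hrefl _)
          · exact Or.inl (key v hvC)
        · rcases Finset.mem_insert.mp hv with hvx | hvC
          · subst hvx; exact Or.inr (key u huC)
          · exact hCchain u huC v hvC
      have hPmcard : Pm.card ≤ N := by
        have hlt : Pm.card < S.card :=
          Finset.card_lt_card ((Finset.ssubset_iff_of_subset hPmS).mpr ⟨mx, hCS hmxC, hmPm⟩)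
        omega
      have hPpcard : Pp.card ≤ N := by
        have hlt : Pp.card < S.card :=
          Finset.card_lt_card ((Finset.ssubset_iff_of_subset hPpS).mpr ⟨lx, hCS hlxC, hlPp⟩)
        omega
      obtain ⟨csm, hcsm, hcovm⟩ := ih Pm hPmcard a (fun T hT => hwidth T (hT.trans hPmS))
      obtain ⟨csp, hcsp, hcovp⟩ := ih Pp hPpcard a (fun T hT => hwidth T (hT.trans hPpS))
      have hgPm : ∀ i, g i ∈ Pm := fun i =>
        Finset.mem_filter.mpr ⟨hAS (hgA i), i, hrefl _⟩
      have hgPp : ∀ i, g i ∈ Pp := fun i =>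
        Finset.mem_filter.mpr ⟨hAS (hgA i), i, hrefl _⟩
      choose σ hσ using fun i => hcovm (g i) (hgPm i)
      choose τ hτ using fun i => hcovp (g i) (hgPp i)
      have hganti : ∀ i j, i ≠ j → ¬(r (g i) (g j) ∨ r (g j) (g i)) := fun i j hne =>
        hAanti (g i) (hgA i) (g j) (hgA j) (fun h => hne (hginj h))
      have hσinj : Function.Injective σ := by
        intro i j h
        by_contra hne
        have hmem : g j ∈ csm (σ i) := by rw [h]; exact hσ j
        exact hganti i j hne ((hcsm (σ i)).2 (g i) (hσ i) (g j) hmem)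
      have hτinj : Function.Injective τ := by
        intro i j h
        by_contra hne
        have hmem : g j ∈ csp (τ i) := by rw [h]; exact hτ j
        exact hganti i j hne ((hcsp (τ i)).2 (g i) (hτ i) (g j) hmem)
      have hσsurj : Function.Surjective σ := Finite.surjective_of_injective hσinj
      have hτsurj : Function.Surjective τ := Finite.surjective_of_injective hτinj
      set D : Fin a → Finset α := fun i => csm (σ i) with hDdef
      set E : Fin a → Finset α := fun i => csp (τ i) with hEdef
      have hDle : ∀ i, ∀ x ∈ D i, r x (g i) := by
        intro i x hx
        have hxPm : x ∈ Pm := (hcsm (σ i)).1 hx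
        obtain ⟨-, j, hj⟩ := Finset.mem_filter.mp hxPm
        rcases (hcsm (σ i)).2 x hx (g i) (hσ i) with h | h
        · exact h
        · by_cases hij : i = j
          · subst hij; exact hj
          · exact absurd (Or.inl (htrans (g i) x (g j) h hj)) (hganti i j hij)
      have hEge : ∀ i, ∀ y ∈ E i, r (g i) y := by
        intro i y hy
        have hyPp : y ∈ Pp := (hcsp (τ i)).1 hy
        obtain ⟨-, j, hj⟩ := Finset.mem_filter.mp hyPp
        rcases (hcsp (τ i)).2 y hy (g i) (hτ i) with h | h
        · by_cases hij : i = j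
          · subst hij; exact hj
          · exact absurd (Or.inr (htrans (g j) y (g i) hj h)) (hganti i j hij)
        · exact h
      refine ⟨fun i => D i ∪ E i, fun i => ⟨?_, ?_⟩, ?_⟩
      · exact Finset.union_subset (((hcsm (σ i)).1).trans hPmS) (((hcsp (τ i)).1).trans hPpS)
      · intro x hx y hy
        rcases Finset.mem_union.mp hx with hx | hx <;> rcases Finset.mem_union.mp hy with hy | hy
        · exact (hcsm (σ i)).2 x hx y hy
        · exact Or.inl (htrans x (g i) y (hDle i x hx) (hEge i y hy))
        · exact Or.inr (htrans y (g i) x (hDle i y hy) (hEge i x hx))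
        · exact (hcsp (τ i)).2 x hx y hy
      · intro x hx
        rcases hcoverS x hx with hm | hp
        · obtain ⟨j, hj⟩ := hcovm x hm
          obtain ⟨i, rfl⟩ := hσsurj j
          exact ⟨i, Finset.mem_union_left _ hj⟩
        · obtain ⟨j, hj⟩ := hcovp x hp
          obtain ⟨i, rfl⟩ := hτsurj j
          exact ⟨i, Finset.mem_union_right _ hj⟩
    · -- easy case: every antichain avoiding C has size ≤ a - 1
      push_neg at hA
      have hw' : ∀ T ⊆ S \ C, FAnti r T → T.card ≤ a - 1 := by
        intro T hT hTa
        have h1 : T.card ≤ a := hwidth T (hT.trans Finset.sdiff_subset) hTa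
        have h2 : T.card ≠ a := fun h => hA T hT hTa h
        omega
      have hcard : (S \ C).card ≤ N := by
        have := Finset.card_sdiff_of_subset hCS
        have hC1 : 1 ≤ C.card := Finset.card_pos.mpr hCne
        omega
      obtain ⟨cs', hcs', hcov'⟩ := ih (S \ C) hcard (a - 1) hw'
      refine ⟨fun i => if h : (i : ℕ) < a - 1 then cs' ⟨i, h⟩ else C, fun i => ?_, ?_⟩
      · dsimp only
        by_cases h : (i : ℕ) < a - 1
        · rw [dif_pos h]
          exact ⟨((hcs' _).1).trans Finset.sdiff_subset, (hcs' _).2⟩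
        · rw [dif_neg h]
          exact ⟨hCS, hCchain⟩
      · intro x hx
        by_cases hxC : x ∈ C
        · refine ⟨⟨a - 1, by omega⟩, ?_⟩
          dsimp only
          rw [dif_neg (by omega)]
          exact hxC
        · obtain ⟨j, hj⟩ := hcov' x (Finset.mem_sdiff.mpr ⟨hx, hxC⟩)
          refine ⟨⟨(j : ℕ), by omega⟩, ?_⟩
          dsimp only
          rw [dif_pos (by exact j.isLt)]
          simpa using hj

end Dilworth

/-- The power graph of a group `G`: distinct elements are adjacent iff one is a power
of the other. -/
def powerGraph (G : Type*) [Group G] : SimpleGraph G where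
  Adj x y := x ≠ y ∧ (x ∈ Subgroup.zpowers y ∨ y ∈ Subgroup.zpowers x)
  symm := ⟨fun _ _ ⟨hne, h⟩ => ⟨hne.symm, h.symm⟩⟩
  loopless := ⟨fun _ ⟨hne, _⟩ => hne rfl⟩
/-- An independent set of a simple graph: a set of pairwise non-adjacent vertices. -/
def SimpleGraph.IsIndependentSet {V : Type*} (G : SimpleGraph V) (s : Set V) : Prop :=
  s.Pairwise fun x y => ¬ G.Adj x y

/-- If every independent set of the power graph of `G` has at most `n` elements, then
the independence number of `P(G)` equals its clique cover number: some `k` is both the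
largest size of an independent set and the least number of cliques partitioning `G`. -/
theorem power_graph_independence_eq_clique_cover
    (G : Type*) [Group G] (n : ℕ)
    (hn : ∀ S : Finset G, (powerGraph G).IsIndependentSet ↑S → S.card ≤ n) :
    ∃ k : ℕ,
      IsGreatest {m | ∃ S : Finset G, (powerGraph G).IsIndependentSet ↑S ∧ S.card = m} k ∧
      IsLeast {m | ∃ c : G → Fin m, ∀ i : Fin m, (powerGraph G).IsClique (c ⁻¹' {i})} k := by
  classical
  set r : G → G → Prop := fun x y => x ∈ Subgroup.zpowers y with hrdef
  have hrefl : ∀ x, r x x := fun x => Subgroup.mem_zpowers x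
  have htrans : ∀ x y z, r x y → r y z → r x z := fun x y z h1 h2 =>
    Subgroup.zpowers_le.mpr h2 h1
  have hadj : ∀ x y : G, (powerGraph G).Adj x y ↔ x ≠ y ∧ (r x y ∨ r y x) := fun x y => Iff.rfl
  -- independent finsets are exactly antichains
  have hindep_iff : ∀ S : Finset G,
      (powerGraph G).IsIndependentSet ↑S ↔ FAnti r S := by
    intro S
    constructor
    · intro h x hx y hy hne hcomp
      exact h (Finset.mem_coe.mpr hx) (Finset.mem_coe.mpr hy) hne ((hadj x y).mpr ⟨hne, hcomp⟩)
    · intro h x hx y hy hne hAdj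
      exact h x (Finset.mem_coe.mp hx) y (Finset.mem_coe.mp hy) hne ((hadj x y).mp hAdj).2
  set M := {m | ∃ S : Finset G, (powerGraph G).IsIndependentSet ↑S ∧ S.card = m} with hMdef
  have hM0 : 0 ∈ M := ⟨∅, by simp [SimpleGraph.IsIndependentSet], by simp⟩
  have hbdd : BddAbove M := ⟨n, fun m hm => by
    obtain ⟨S, hS, hc⟩ := hm
    exact hc ▸ hn S hS⟩
  set k := sSup M with hkdef
  have hkmem : k ∈ M := Nat.sSup_mem ⟨0, hM0⟩ hbdd
  have hkgreat : IsGreatest M k := ⟨hkmem, fun m hm => le_csSup hbdd hm⟩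
  have hk1 : 1 ≤ k := by
    apply hkgreat.2
    refine ⟨{1}, ?_, by simp⟩
    intro x hx y hy hne
    simp at hx hy
    exact absurd (hx.trans hy.symm) hne
  have hwidth : ∀ T : Finset G, FAnti r T → T.card ≤ k := by
    intro T hT
    exact hkgreat.2 ⟨T, (hindep_iff T).mpr hT, rfl⟩
  refine ⟨k, hkgreat, ?_, ?_⟩
  · -- there is a partition of G into k cliques, by compactness
    set A : Finset G → Set (G → Fin k) :=
      fun S => {f | ∀ x ∈ S, ∀ y ∈ S, f x = f y → x = y ∨ (r x y ∨ r y x)} with hAdef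
    have hclosed : ∀ S, IsClosed (A S) := by
      intro S
      have : A S = ⋂ x ∈ S, ⋂ y ∈ S,
          (fun f : G → Fin k => (f x, f y)) ⁻¹'
            {p : Fin k × Fin k | p.1 = p.2 → x = y ∨ (r x y ∨ r y x)} := by
        ext f
        simp [hAdef, Set.mem_iInter]
      rw [this]
      refine isClosed_biInter fun x _ => isClosed_biInter fun y _ => ?_
      exact (isClosed_discrete _).preimage ((continuous_apply x).prodMk (continuous_apply y))
    have hne : ∀ S, (A S).Nonempty := by
      intro S
      obtain ⟨cs, hcs, hcov⟩ := dilworth r hrefl htrans S.card S le_rfl k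
        (fun T _ hT => hwidth T hT)
      refine ⟨fun x => if h : ∃ i, x ∈ cs i then h.choose else ⟨0, hk1⟩, ?_⟩
      intro x hx y hy hxy
      have hxex : ∃ i, x ∈ cs i := hcov x hx
      have hyex : ∃ i, y ∈ cs i := hcov y hy
      simp only at hxy
      rw [dif_pos hxex, dif_pos hyex] at hxy
      have hx' : x ∈ cs hyex.choose := hxy ▸ hxex.choose_spec
      exact Or.inr ((hcs hyex.choose).2 x hx' y hyex.choose_spec)
    have hdir : Directed (· ⊇ ·) A := by
      intro S T
      refine ⟨S ∪ T, ?_, ?_⟩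
      · intro f hf x hx y hy
        exact hf x (Finset.mem_union_left _ hx) y (Finset.mem_union_left _ hy)
      · intro f hf x hx y hy
        exact hf x (Finset.mem_union_right _ hx) y (Finset.mem_union_right _ hy)
    obtain ⟨f, hf⟩ := IsCompact.nonempty_iInter_of_directed_nonempty_isCompact_isClosed
      A hdir hne (fun S => (hclosed S).isCompact) hclosed
    refine ⟨f, fun i => ?_⟩
    intro x hx y hy hne2
    have hfxy : f x = f y := by
      have hx' : f x = i := hx
      have hy' : f y = i := hy
      rw [hx', hy']
    have hmem := Set.mem_iInter.mp hf {x, y}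
    have := hmem x (by simp) y (by simp) hfxy
    rcases this with h | h
    · exact absurd h hne2
    · exact (hadj x y).mpr ⟨hne2, h⟩
  · -- every clique cover has at least k parts
    rintro m ⟨c, hc⟩
    obtain ⟨S, hS, hcard⟩ := hkmem
    have hinj : Set.InjOn c ↑S := by
      intro x hx y hy hcxy
      by_contra hne
      have hxmem : x ∈ c ⁻¹' {c x} := rfl
      have hymem : y ∈ c ⁻¹' {c x} := by
        simp only [Set.mem_preimage, Set.mem_singleton_iff]
        exact hcxy.symm
      exact hS hx hy hne (hc (c x) hxmem hymem hne)
    have : S.card ≤ (Finset.univ : Finset (Fin m)).card :=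
      Finset.card_le_card_of_injOn c (fun _ _ => Finset.mem_univ _) hinj
    rw [hcard] at this
    simpa using this
end

section
/- Let p be a prime and H a finite group with p not dividing |H|. Then the independence number of the power graph P(C_{p^∞} × H) equals the number of cyclic subgroups of H. -/
/-- The Prüfer `p`-group `C_{p^∞}`, as the `p`-primary component of `ℚ/ℤ`. -/
abbrev PruferGroup (p : ℕ) [Fact p.Prime] : AddSubgroup (ℚ ⧸ AddSubgroup.zmultiples (1 : ℚ)) :=
  AddCommGroup.primaryComponent (ℚ ⧸ AddSubgroup.zmultiples (1 : ℚ)) p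

local notation "QZ" => ℚ ⧸ AddSubgroup.zmultiples (1 : ℚ)

/-- torsion: if `n • z = 0` then `z` is a multiple of `1/n`. -/
lemma qz_torsion (n : ℕ) (hn : 0 < n) (z : QZ) (hz : n • z = 0) :
    ∃ m : ℤ, z = m • (((1 : ℚ) / n : ℚ) : QZ) := by
  obtain ⟨q, rfl⟩ := QuotientAddGroup.mk_surjective z
  rw [← QuotientAddGroup.mk_nsmul, QuotientAddGroup.eq_zero_iff] at hz
  obtain ⟨m, hm⟩ := hz
  refine ⟨m, ?_⟩
  rw [← QuotientAddGroup.mk_zsmul]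
  congr 1
  have hn' : (n : ℚ) ≠ 0 := Nat.cast_ne_zero.2 hn.ne'
  have h2 : (m : ℚ) = n * q := by
    have := hm; simp only [zsmul_eq_mul, mul_one, nsmul_eq_mul] at this; linarith [this]
  rw [zsmul_eq_mul, h2, mul_one_div, mul_div_cancel_left₀ _ hn']

lemma qz_addOrderOf_one_div (n : ℕ) (hn : 0 < n) :
    addOrderOf (((1 : ℚ) / n : ℚ) : QZ) = n := by
  haveI : Fact ((0:ℚ) < 1) := ⟨one_pos⟩
  exact AddCircle.addOrderOf_period_div (p := (1:ℚ)) hn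

/-- chain property in ℚ/ℤ for p-power order elements -/
lemma qz_chain (p : ℕ) (hp : 0 < p) (a b : ℕ) (hab : a ≤ b) (x y : QZ)
    (hx : addOrderOf x = p ^ a) (hy : addOrderOf y = p ^ b) :
    ∃ m : ℤ, x = m • y := by
  have hpb : 0 < p ^ b := pow_pos hp b
  set u : QZ := (((1 : ℚ) / (p ^ b : ℕ) : ℚ) : QZ) with hu
  have hou : addOrderOf u = p ^ b := qz_addOrderOf_one_div _ hpb
  have hy0 : (p ^ b) • y = 0 := by rw [← hy]; exact addOrderOf_nsmul_eq_zero y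
  obtain ⟨m, hm⟩ := qz_torsion _ hpb y hy0
  have hyu : AddSubgroup.zmultiples y ≤ AddSubgroup.zmultiples u := by
    rw [AddSubgroup.zmultiples_le]
    exact ⟨m, hm.symm⟩
  have hfo : IsOfFinAddOrder u := by rw [← addOrderOf_pos_iff, hou]; exact hpb
  have hfin : Finite (AddSubgroup.zmultiples u) := hfo.finite_zmultiples.to_subtype
  have heq : AddSubgroup.zmultiples y = AddSubgroup.zmultiples u := by
    apply AddSubgroup.eq_of_le_of_card_ge hyu
    rw [Nat.card_zmultiples, Nat.card_zmultiples, hou, hy]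
  have hx0 : (p ^ b) • x = 0 := by
    obtain ⟨c, hc⟩ : p ^ a ∣ p ^ b := pow_dvd_pow p hab
    have h3 : (p ^ b) • x = c • ((p ^ a) • x) := by rw [hc, mul_nsmul, smul_comm]
    rw [h3, ← hx, addOrderOf_nsmul_eq_zero, smul_zero]
  obtain ⟨k, hk⟩ := qz_torsion _ hpb x hx0
  have hxu : x ∈ AddSubgroup.zmultiples u := ⟨k, hk.symm⟩
  rw [← heq] at hxu
  obtain ⟨m', hm'⟩ := hxu
  exact ⟨m', hm'.symm⟩

section Prufer
variable {p : ℕ} [Fact p.Prime]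

/-- coercion of a Prüfer group element to ℚ/ℤ -/
noncomputable def pc (x : Multiplicative ↥(PruferGroup p)) : QZ :=
  ((Multiplicative.toAdd x : ↥(PruferGroup p)) : QZ)

lemma pc_injective : Function.Injective (pc (p := p)) := fun _ _ h =>
  Multiplicative.toAdd.injective (Subtype.ext h)

lemma orderOf_eq_addOrderOf_pc (x : Multiplicative ↥(PruferGroup p)) :
    orderOf x = addOrderOf (pc x) := by
  rw [pc, AddSubgroup.addOrderOf_coe]
  rfl

lemma exists_pow_orderOf (x : Multiplicative ↥(PruferGroup p)) :
    ∃ n : ℕ, orderOf x = p ^ n := by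
  rw [orderOf_eq_addOrderOf_pc]
  exact AddCommGroup.mem_primaryComponent_iff_addOrderOf.1 (Multiplicative.toAdd x).2

lemma mem_zpowers_iff_pc (x y : Multiplicative ↥(PruferGroup p)) :
    x ∈ Subgroup.zpowers y ↔ ∃ n : ℤ, pc x = n • pc y := by
  rw [Subgroup.mem_zpowers_iff]
  constructor
  · rintro ⟨n, rfl⟩
    exact ⟨n, by simp [pc]⟩
  · rintro ⟨n, hn⟩
    refine ⟨n, pc_injective ?_⟩
    rw [hn]; simp [pc]

/-- chain property for the Prüfer group -/
lemma prufer_chain (x y : Multiplicative ↥(PruferGroup p)) :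
    x ∈ Subgroup.zpowers y ∨ y ∈ Subgroup.zpowers x := by
  obtain ⟨a, ha⟩ := exists_pow_orderOf x
  obtain ⟨b, hb⟩ := exists_pow_orderOf y
  rw [orderOf_eq_addOrderOf_pc] at ha hb
  rcases le_total a b with hab | hab
  · exact Or.inl ((mem_zpowers_iff_pc x y).2
      (qz_chain p (Fact.out : p.Prime).pos a b hab _ _ ha hb))
  · exact Or.inr ((mem_zpowers_iff_pc y x).2
      (qz_chain p (Fact.out : p.Prime).pos b a hab _ _ hb ha))

/-- existence of an element of order `p ^ n` in the Prüfer group -/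
lemma prufer_exists_orderOf (n : ℕ) :
    ∃ x : Multiplicative ↥(PruferGroup p), orderOf x = p ^ n := by
  have hpn : 0 < p ^ n := pow_pos (Fact.out : p.Prime).pos n
  have h : addOrderOf (((1 : ℚ) / (p ^ n : ℕ) : ℚ) : QZ) = p ^ n :=
    qz_addOrderOf_one_div _ hpn
  refine ⟨Multiplicative.ofAdd ⟨_, AddCommGroup.mem_primaryComponent_iff_addOrderOf.2 ⟨n, h⟩⟩, ?_⟩
  rw [orderOf_eq_addOrderOf_pc]
  exact h

end Prufer

lemma crt_mem_zpowers {G₁ G₂ : Type*} [Group G₁] [Group G₂] {a : G₁} {h : G₂}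
    (b : G₁) (k : G₂) (ha : a ∈ Subgroup.zpowers b) (hh : h ∈ Subgroup.zpowers k)
    (hcop : Nat.Coprime (orderOf b) (orderOf k)) :
    (a, h) ∈ Subgroup.zpowers (b, k) := by
  rw [Subgroup.mem_zpowers_iff] at ha hh ⊢
  obtain ⟨i, rfl⟩ := ha
  obtain ⟨j, rfl⟩ := hh
  have hco : IsCoprime (orderOf b : ℤ) (orderOf k : ℤ) := by
    rw [Int.isCoprime_iff_gcd_eq_one, Int.gcd_natCast_natCast]
    exact hcop
  obtain ⟨u, v, huv⟩ := hco
  set n : ℤ := i * (v * orderOf k) + j * (u * orderOf b) with hn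
  refine ⟨n, ?_⟩
  have h1 : b ^ n = b ^ i := by
    rw [← orderOf_dvd_sub_iff_zpow_eq_zpow]
    exact ⟨u * (j - i), by rw [hn]; linear_combination i * huv⟩
  have h2 : k ^ n = k ^ j := by
    rw [← orderOf_dvd_sub_iff_zpow_eq_zpow]
    exact ⟨v * (i - j), by rw [hn]; linear_combination j * huv⟩
  have h3 : (b, k) ^ n = (b ^ n, k ^ n) := rfl
  rw [h3, h1, h2]

lemma zpowers_eq_of_isCyclic {H : Type*} [Group H] (K : Subgroup H) (hK : IsCyclic ↥K) :
    ∃ h : H, Subgroup.zpowers h = K := by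
  obtain ⟨⟨g, hgK⟩, hg⟩ := hK.exists_generator
  refine ⟨g, le_antisymm (Subgroup.zpowers_le.2 hgK) ?_⟩
  intro x hx
  obtain ⟨n, hn⟩ := Subgroup.mem_zpowers_iff.1 (hg ⟨x, hx⟩)
  exact Subgroup.mem_zpowers_iff.2 ⟨n, by simpa using congrArg (Subtype.val) hn⟩

lemma isCyclic_zpowers {H : Type*} [Group H] (g : H) : IsCyclic ↥(Subgroup.zpowers g) := by
  refine ⟨⟨⟨g, Subgroup.mem_zpowers g⟩, ?_⟩⟩
  rintro ⟨x, hx⟩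
  obtain ⟨n, hn⟩ := Subgroup.mem_zpowers_iff.1 hx
  exact Subgroup.mem_zpowers_iff.2 ⟨n, by ext; simpa using hn⟩

/-- For a prime `p` and finite group `H` with `p ∤ |H|`, the independence number of the
power graph of `C_{p^∞} × H` equals the number of cyclic subgroups of `H`. -/
theorem power_graph_prufer_prod_independence_number
    (p : ℕ) [Fact p.Prime] (H : Type*) [Group H] [Fintype H]
    (hpH : ¬ p ∣ Fintype.card H) :
    IsGreatest
      {m | ∃ S : Finset (Multiplicative ↥(PruferGroup p) × H),
        (powerGraph (Multiplicative ↥(PruferGroup p) × H)).IsIndependentSet ↑S ∧ S.card = m}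
      (Nat.card {K : Subgroup H // IsCyclic ↥K}) := by
  classical
  have hp : p.Prime := Fact.out
  haveI : Fintype {K : Subgroup H // IsCyclic ↥K} := Fintype.ofFinite _
  have hcop : ∀ (y : Multiplicative ↥(PruferGroup p)) (h : H),
      Nat.Coprime (orderOf y) (orderOf h) := by
    intro y h
    obtain ⟨n, hn⟩ := exists_pow_orderOf y
    rw [hn]
    refine Nat.Coprime.pow_left n ?_
    rw [hp.coprime_iff_not_dvd]
    exact fun hdvd => hpH (hdvd.trans orderOf_dvd_card)
  constructor
  · -- the value is attained
    choose g hg using fun K : {K : Subgroup H // IsCyclic ↥K} =>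
      zpowers_eq_of_isCyclic K.1 K.2
    choose a ha using fun K : {K : Subgroup H // IsCyclic ↥K} =>
      prufer_exists_orderOf (p := p) (Fintype.card H - Nat.card K.1)
    set f : {K : Subgroup H // IsCyclic ↥K} → Multiplicative ↥(PruferGroup p) × H :=
      fun K => (a K, g K) with hf
    have hfinj : Function.Injective f := by
      intro K K' hKK'
      have h2 : g K = g K' := congrArg Prod.snd hKK'
      exact Subtype.ext (by rw [← hg K, ← hg K', h2])
    have key : ∀ K K' : {K : Subgroup H // IsCyclic ↥K},
        f K ∈ Subgroup.zpowers (f K') → K = K' := by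
      intro K K' hmem
      obtain ⟨n, hn⟩ := Subgroup.mem_zpowers_iff.1 hmem
      have h2 : g K ∈ Subgroup.zpowers (g K') :=
        Subgroup.mem_zpowers_iff.2 ⟨n, congrArg Prod.snd hn⟩
      have h1 : a K ∈ Subgroup.zpowers (a K') :=
        Subgroup.mem_zpowers_iff.2 ⟨n, congrArg Prod.fst hn⟩
      have hle : K.1 ≤ K'.1 := by
        rw [← hg K, ← hg K']
        exact Subgroup.zpowers_le.2 h2
      by_contra hne
      have hlt : K.1 < K'.1 := lt_of_le_of_ne hle fun h => hne (Subtype.ext h)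
      have hcard : Nat.card K.1 < Nat.card K'.1 := by
        refine lt_of_le_of_ne (Subgroup.card_le_of_le hle) fun heq => ?_
        exact hlt.ne (Subgroup.eq_of_le_of_card_ge hle heq.ge)
      have hcard' : Nat.card K'.1 ≤ Fintype.card H := by
        rw [← Nat.card_eq_fintype_card (α := H)]
        exact Subgroup.card_le_card_group (H := K'.1)
      have hdvd := orderOf_dvd_of_mem_zpowers h1
      rw [ha K, ha K'] at hdvd
      have hle2 := (Nat.pow_dvd_pow_iff_le_right hp.one_lt).1 hdvd
      omega
    refine ⟨Finset.univ.image f, ?_, ?_⟩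
    · intro x hx y hy hxy hadj
      simp only [Finset.coe_image, Finset.coe_univ, Set.image_univ, Set.mem_range] at hx hy
      obtain ⟨K, rfl⟩ := hx
      obtain ⟨K', rfl⟩ := hy
      obtain ⟨hne, hmem | hmem⟩ := hadj
      · exact hxy (congrArg f (key K K' hmem))
      · exact hxy (congrArg f (key K' K hmem).symm)
    · rw [Finset.card_image_of_injective _ hfinj, Finset.card_univ, Nat.card_eq_fintype_card]
  · -- upper bound
    rintro m ⟨S, hS, rfl⟩
    set F : Multiplicative ↥(PruferGroup p) × H → {K : Subgroup H // IsCyclic ↥K} :=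
      fun x => ⟨Subgroup.zpowers x.2, isCyclic_zpowers _⟩ with hF
    have hinj : Set.InjOn F ↑S := by
      intro x hx y hy hFxy
      by_contra hne
      have hzp : Subgroup.zpowers x.2 = Subgroup.zpowers y.2 := congrArg Subtype.val hFxy
      have hx2 : x.2 ∈ Subgroup.zpowers y.2 := hzp ▸ Subgroup.mem_zpowers x.2
      have hy2 : y.2 ∈ Subgroup.zpowers x.2 := hzp ▸ Subgroup.mem_zpowers y.2
      have hnadj := hS hx hy hne
      rcases prufer_chain x.1 y.1 with h1 | h1
      · exact hnadj ⟨hne, Or.inl (crt_mem_zpowers y.1 y.2 h1 hx2 (hcop y.1 y.2))⟩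
      · exact hnadj ⟨hne, Or.inr (crt_mem_zpowers x.1 x.2 h1 hy2 (hcop x.1 x.2))⟩
    calc S.card ≤ Fintype.card {K : Subgroup H // IsCyclic ↥K} := by
          simpa using Finset.card_le_card_of_injOn F (fun _ _ => Finset.mem_univ _) hinj
      _ = Nat.card {K : Subgroup H // IsCyclic ↥K} := Nat.card_eq_fintype_card.symm
end

section
/- Let G be a cyclic group of order pq where p and q are distinct primes. Then the subgraph of the power graph P(G) induced on the set of elements that are neither the identity nor generators of G is disconnected; it is the disjoint union of a complete graph on the p−1 elements of order p and a complete graph on the q−1 elements of order q, with no edges between them. -/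
open Subgroup

private lemma mem_zpowers_of_orderOf_eq {G : Type*} [Group G] [Fintype G] [IsCyclic G]
    {g h : G} (hd : orderOf h = orderOf g) : h ∈ Subgroup.zpowers g := by
  classical
  set d := orderOf g with hdd
  have hd0 : 0 < d := orderOf_pos g
  set S : Finset G := Finset.univ.filter (fun x => x ^ d = 1) with hS
  have hcardS : S.card ≤ d := IsCyclic.card_pow_eq_one_le hd0
  set T : Finset G := (Subgroup.zpowers g : Set G).toFinset with hT
  have hTS : T ⊆ S := by
    intro x hx
    simp only [hT, Set.mem_toFinset, SetLike.mem_coe] at hx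
    simp only [hS, Finset.mem_filter, Finset.mem_univ, true_and]
    exact orderOf_dvd_iff_pow_eq_one.mp (dvd_trans (orderOf_dvd_of_mem_zpowers hx) dvd_rfl)
  have hTcard : T.card = d := by
    rw [hT, Set.toFinset_card, ← Nat.card_eq_fintype_card]
    exact Nat.card_zpowers g
  have hST : S = T := (Finset.eq_of_subset_of_card_le hTS (hTcard ▸ hcardS)).symm
  have hhS : h ∈ S := by
    simp only [hS, Finset.mem_filter, Finset.mem_univ, true_and]
    rw [← hd]
    exact pow_orderOf_eq_one h
  rw [hST] at hhS
  simpa [hT, Set.mem_toFinset] using hhS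

/-- In a cyclic group of order `p * q` (`p ≠ q` primes), the subgraph of the power graph
induced on the non-identity non-generators is disconnected: it is the disjoint union of
a complete graph on the `p - 1` elements of order `p` and a complete graph on the
`q - 1` elements of order `q`, with no edges between them. -/
theorem power_graph_cyclic_pq_disconnected
    (G : Type*) [Group G] [Fintype G] [IsCyclic G]
    (p q : ℕ) (hp : p.Prime) (hq : q.Prime) (hpq : p ≠ q)
    (hcard : Fintype.card G = p * q) :
    (∀ g ∈ {g : G | g ≠ 1 ∧ Subgroup.zpowers g ≠ ⊤}, orderOf g = p ∨ orderOf g = q) ∧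
    Set.ncard {g : G | (g ≠ 1 ∧ Subgroup.zpowers g ≠ ⊤) ∧ orderOf g = p} = p - 1 ∧
    Set.ncard {g : G | (g ≠ 1 ∧ Subgroup.zpowers g ≠ ⊤) ∧ orderOf g = q} = q - 1 ∧
    (∀ g ∈ {g : G | g ≠ 1 ∧ Subgroup.zpowers g ≠ ⊤},
      ∀ h ∈ {g : G | g ≠ 1 ∧ Subgroup.zpowers g ≠ ⊤},
        g ≠ h → orderOf g = orderOf h → (powerGraph G).Adj g h) ∧
    (∀ g h : G, orderOf g = p → orderOf h = q → ¬ (powerGraph G).Adj g h) ∧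
    ¬ ((powerGraph G).induce {g : G | g ≠ 1 ∧ Subgroup.zpowers g ≠ ⊤}).Connected := by
  classical
  have hq1 : q ≠ 1 := hq.ne_one
  have hp1 : p ≠ 1 := hp.ne_one
  -- order of a non-identity non-generator is p or q
  have horder : ∀ g ∈ {g : G | g ≠ 1 ∧ Subgroup.zpowers g ≠ ⊤}, orderOf g = p ∨ orderOf g = q := by
    rintro g ⟨hg1, hgtop⟩
    have hdvd : orderOf g ∣ p * q := hcard ▸ orderOf_dvd_card
    have hne1 : orderOf g ≠ 1 := by simpa [orderOf_eq_one_iff] using hg1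
    have hnepq : orderOf g ≠ p * q := by
      intro h
      apply hgtop
      apply Subgroup.eq_top_of_card_eq
      rw [Nat.card_zpowers, h, ← hcard, Nat.card_eq_fintype_card]
    rcases (Nat.Prime.eq_one_or_self_of_dvd hp (Nat.gcd (orderOf g) p) (Nat.gcd_dvd_right _ _)) with h1 | h2
    · -- gcd = 1, so orderOf g coprime to p, divides q
      have hco : Nat.Coprime (orderOf g) p := h1
      have : orderOf g ∣ q := (Nat.Coprime.dvd_of_dvd_mul_left hco hdvd)
      rcases (Nat.Prime.eq_one_or_self_of_dvd hq _ this) with h | h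
      · exact absurd h hne1
      · exact Or.inr h
    · -- p ∣ orderOf g
      have hpd : p ∣ orderOf g := h2 ▸ Nat.gcd_dvd_left _ _
      obtain ⟨e, he⟩ := hpd
      have hppos : 0 < p := hp.pos
      have hedvd : e ∣ q := by
        have : p * e ∣ p * q := he ▸ hdvd
        exact (Nat.mul_dvd_mul_iff_left hppos).mp this
      rcases (Nat.Prime.eq_one_or_self_of_dvd hq _ hedvd) with h | h
      · left; rw [he, h, mul_one]
      · exfalso; exact hnepq (by rw [he, h])
  -- order p (resp q) implies membership in the set
  have hmem : ∀ (d : ℕ), d.Prime → d ∣ p * q → d ≠ p * q → ∀ g : G, orderOf g = d →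
      g ≠ 1 ∧ Subgroup.zpowers g ≠ ⊤ := by
    intro d hd hdvd hdne g hg
    constructor
    · intro h; rw [h, orderOf_one] at hg; exact hd.ne_one hg.symm
    · intro h
      have : orderOf g = Fintype.card G := by
        rw [← Nat.card_zpowers g, h, Subgroup.card_top, Nat.card_eq_fintype_card]
      rw [hg, hcard] at this
      exact hdne this
  have hpnepq : p ≠ p * q := by
    intro h
    nth_rewrite 1 [← mul_one p] at h
    exact hq1 ((Nat.eq_of_mul_eq_mul_left hp.pos h).symm)
  have hqnepq : q ≠ p * q := by
    intro h
    nth_rewrite 1 [← one_mul q] at h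
    exact hp1 ((Nat.eq_of_mul_eq_mul_right hq.pos h).symm)
  have hsetp : {g : G | (g ≠ 1 ∧ Subgroup.zpowers g ≠ ⊤) ∧ orderOf g = p} = {g : G | orderOf g = p} := by
    ext g
    simp only [Set.mem_setOf_eq, and_iff_right_iff_imp]
    exact hmem p hp (dvd_mul_right p q) hpnepq g
  have hsetq : {g : G | (g ≠ 1 ∧ Subgroup.zpowers g ≠ ⊤) ∧ orderOf g = q} = {g : G | orderOf g = q} := by
    ext g
    simp only [Set.mem_setOf_eq, and_iff_right_iff_imp]
    exact hmem q hq (dvd_mul_left q p) hqnepq g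
  have hcount : ∀ (d : ℕ), d.Prime → d ∣ Fintype.card G →
      Set.ncard {g : G | orderOf g = d} = d - 1 := by
    intro d hd hdvd
    rw [Set.ncard_eq_toFinset_card']
    have := IsCyclic.card_orderOf_eq_totient (α := G) hdvd
    rw [← Nat.totient_prime hd, ← this]
    congr 1
    ext g
    simp
  -- adjacency within same order
  have hadj : ∀ g ∈ {g : G | g ≠ 1 ∧ Subgroup.zpowers g ≠ ⊤},
      ∀ h ∈ {g : G | g ≠ 1 ∧ Subgroup.zpowers g ≠ ⊤},
        g ≠ h → orderOf g = orderOf h → (powerGraph G).Adj g h := by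
    intro g _ h _ hne heq
    exact ⟨hne, Or.inl (mem_zpowers_of_orderOf_eq heq)⟩
  -- no adjacency between order p and order q
  have hnadj : ∀ g h : G, orderOf g = p → orderOf h = q → ¬ (powerGraph G).Adj g h := by
    intro g h hg hh ⟨_, hor⟩
    rcases hor with h' | h'
    · have := orderOf_dvd_of_mem_zpowers h'
      rw [hg, hh] at this
      exact hpq ((Nat.prime_dvd_prime_iff_eq hp hq).mp this)
    · have := orderOf_dvd_of_mem_zpowers h'
      rw [hg, hh] at this
      exact hpq.symm ((Nat.prime_dvd_prime_iff_eq hq hp).mp this)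
  refine ⟨horder, by rw [hsetp]; exact hcount p hp (hcard ▸ dvd_mul_right p q),
    by rw [hsetq]; exact hcount q hq (hcard ▸ dvd_mul_left q p), hadj, hnadj, ?_⟩
  -- disconnectedness
  intro hconn
  -- there exist elements of order p and of order q
  have hpex : ∃ g : G, orderOf g = p := by
    have hcp : Set.ncard {g : G | orderOf g = p} = p - 1 := hcount p hp (hcard ▸ dvd_mul_right p q)
    by_contra h
    push_neg at h
    have he : {g : G | orderOf g = p} = ∅ := by ext g; simp [h g]
    rw [he, Set.ncard_empty] at hcp
    have := hp.two_le
    omega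
  have hqex : ∃ g : G, orderOf g = q := by
    have hcq : Set.ncard {g : G | orderOf g = q} = q - 1 := hcount q hq (hcard ▸ dvd_mul_left q p)
    by_contra h
    push_neg at h
    have he : {g : G | orderOf g = q} = ∅ := by ext g; simp [h g]
    rw [he, Set.ncard_empty] at hcq
    have := hq.two_le
    omega
  obtain ⟨g, hg⟩ := hpex
  obtain ⟨h, hh⟩ := hqex
  set S : Set G := {g : G | g ≠ 1 ∧ Subgroup.zpowers g ≠ ⊤} with hSdef
  have step : ∀ a b : S, ((powerGraph G).induce S).Adj a b →
      orderOf (a : G) = orderOf (b : G) := by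
    intro a b hab
    have hdvd : orderOf (a : G) ∣ orderOf (b : G) ∨ orderOf (b : G) ∣ orderOf (a : G) := by
      rcases hab with ⟨_, h' | h'⟩
      · exact Or.inl (orderOf_dvd_of_mem_zpowers h')
      · exact Or.inr (orderOf_dvd_of_mem_zpowers h')
    rcases horder _ a.2 with ha | ha <;> rcases horder _ b.2 with hb | hb <;>
      rw [ha, hb] <;> rcases hdvd with h' | h' <;> rw [ha, hb] at h' <;>
      first
        | rfl
        | exact ((Nat.prime_dvd_prime_iff_eq hp hq).mp h')
        | exact ((Nat.prime_dvd_prime_iff_eq hq hp).mp h').symm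
        | exact ((Nat.prime_dvd_prime_iff_eq hq hp).mp h')
        | exact ((Nat.prime_dvd_prime_iff_eq hp hq).mp h').symm
  have key : ∀ a b : S, ((powerGraph G).induce S).Walk a b →
      orderOf (a : G) = orderOf (b : G) := by
    intro a b w
    induction w with
    | nil => rfl
    | cons hadj _ ih => exact (step _ _ hadj).trans ih
  have hu : g ∈ S := hmem p hp (dvd_mul_right p q) hpnepq g hg
  have hv : h ∈ S := hmem q hq (dvd_mul_left q p) hqnepq h hh
  have := (hconn.preconnected ⟨g, hu⟩ ⟨h, hv⟩).elim (key ⟨g, hu⟩ ⟨h, hv⟩)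
  simp only at this
  rw [hg, hh] at this
  exact hpq this
end

section
/- Let G be the generalized quaternion group Q_{2^n} of order 2^n (n ≥ 3), and delete from the power graph P(G) the identity and the unique involution of G. The resulting induced graph is the disjoint union of a complete graph on 2^{n-1} − 2 vertices (the remaining elements of the cyclic subgroup of index 2) and 2^{n-2} disjoint edges (each joining an element of order 4 outside that cyclic subgroup to its inverse). -/
open Subgroup

/-- In `ZMod (2*m)`, the only solutions of `i + i = 0` are `0` and `m`. -/
lemma two_mul_zmod_eq_zero {m : ℕ} [NeZero m] {i : ZMod (2*m)} (h : i + i = 0) :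
    i = 0 ∨ i = (m : ZMod (2*m)) := by
  haveI : NeZero (2*m) := ⟨by have := NeZero.pos m; omega⟩
  have h1 : ((i.val + i.val : ℕ) : ZMod (2*m)) = 0 := by
    push_cast
    rw [ZMod.natCast_val, ZMod.cast_id]
    exact h
  have h2 : 2*m ∣ i.val + i.val := (ZMod.natCast_eq_zero_iff _ _).mp h1
  have h3 : i.val < 2*m := ZMod.val_lt i
  have h4 : i.val = 0 ∨ i.val = m := by
    obtain ⟨k, hk⟩ := h2
    rcases Nat.lt_or_ge k 2 with hk2 | hk2
    · interval_cases k <;> omega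
    · have : 2*m*2 ≤ 2*m*k := Nat.mul_le_mul_left _ hk2
      omega
  rcases h4 with h4 | h4
  · left
    have := ZMod.natCast_val (R := ZMod (2*m)) i
    rw [ZMod.cast_id] at this
    rw [← this, h4, Nat.cast_zero]
  · right
    have := ZMod.natCast_val (R := ZMod (2*m)) i
    rw [ZMod.cast_id] at this
    rw [← this, h4]

/-- The generalized quaternion group has a unique involution, namely `a n`. -/
lemma quaternion_orderOf_eq_two {m : ℕ} [NeZero m] (w : QuaternionGroup m)
    (hw : orderOf w = 2) : w = QuaternionGroup.a (m : ZMod (2*m)) := by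
  cases w with
  | a i =>
    have h1 : QuaternionGroup.a i ≠ 1 := by
      intro h; rw [h, orderOf_one] at hw; norm_num at hw
    have h2 : (QuaternionGroup.a i) ^ 2 = 1 := by
      rw [← hw]; exact pow_orderOf_eq_one _
    rw [pow_two, QuaternionGroup.a_mul_a, QuaternionGroup.one_def] at h2
    have h3 : i + i = 0 := by injection h2
    rcases two_mul_zmod_eq_zero h3 with h | h
    · exact absurd (by rw [h, QuaternionGroup.one_def]) h1
    · rw [h]
  | xa i =>
    rw [QuaternionGroup.orderOf_xa] at hw
    norm_num at hw

/-- In a finite cyclic 2-group, any two cyclic subgroups are comparable. -/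
lemma cyclic_two_group_comparable {H : Type*} [Group H] [Finite H] [IsCyclic H] {k : ℕ}
    (hH : Nat.card H = 2 ^ k) (x y : H) : x ∈ zpowers y ∨ y ∈ zpowers x := by
  classical
  cases nonempty_fintype H
  have aux : ∀ u v : H, orderOf u ∣ orderOf v → u ∈ zpowers v := by
    intro u v hdvd
    have hv : 0 < orderOf v := orderOf_pos v
    have hS := IsCyclic.card_pow_eq_one_le (α := H) hv
    set S : Finset H := Finset.univ.filter (fun w => w ^ orderOf v = 1) with hSdef
    set T : Finset H := Finset.univ.filter (fun w => w ∈ zpowers v) with hTdef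
    have hTS : T ⊆ S := by
      intro w hw
      rw [hTdef, Finset.mem_filter] at hw
      rw [hSdef, Finset.mem_filter]
      exact ⟨Finset.mem_univ _, orderOf_dvd_iff_pow_eq_one.mp
        (orderOf_dvd_of_mem_zpowers hw.2)⟩
    have hTcard : T.card = orderOf v := by
      rw [hTdef, ← Fintype.card_subtype, ← Nat.card_eq_fintype_card]
      exact Nat.card_zpowers v
    have hST : T = S := Finset.eq_of_subset_of_card_le hTS (by rw [hTcard]; exact hS)
    have hu : u ∈ S := by
      rw [hSdef, Finset.mem_filter]
      exact ⟨Finset.mem_univ _, orderOf_dvd_iff_pow_eq_one.mp hdvd⟩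
    rw [← hST, hTdef, Finset.mem_filter] at hu
    exact hu.2
  have hx : orderOf x ∣ 2 ^ k := hH ▸ orderOf_dvd_natCard x
  have hy : orderOf y ∣ 2 ^ k := hH ▸ orderOf_dvd_natCard y
  obtain ⟨s, hs, hsx⟩ := (Nat.dvd_prime_pow Nat.prime_two).mp hx
  obtain ⟨t, ht, hty⟩ := (Nat.dvd_prime_pow Nat.prime_two).mp hy
  rcases Nat.le_or_le s t with hst | hst
  · exact Or.inl (aux x y (by rw [hsx, hty]; exact pow_dvd_pow 2 hst))
  · exact Or.inr (aux y x (by rw [hsx, hty]; exact pow_dvd_pow 2 hst))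

/-- If two elements of equal (finite) order generate comparable cyclic subgroups,
those subgroups coincide. -/
lemma mem_zpowers_flip {G : Type*} [Group G] [Finite G] {g h : G}
    (e : orderOf g = orderOf h) (hm : g ∈ zpowers h) : h ∈ zpowers g := by
  have hle : zpowers g ≤ zpowers h := zpowers_le.mpr hm
  have : zpowers g = zpowers h := Subgroup.eq_of_le_of_card_ge hle
    (by rw [Nat.card_zpowers, Nat.card_zpowers, e])
  rw [this]
  exact mem_zpowers h

/-- An element of the cyclic group generated by an element of order 4 that is not
`1`, `g`, or `g ^ 2` must be `g⁻¹`. -/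
lemma eq_inv_of_mem_zpowers_orderOf_four {G : Type*} [Group G] {g h : G}
    (hg : orderOf g = 4) (hh : h ∈ zpowers g)
    (h1 : h ≠ 1) (h2 : h ≠ g) (h3 : h ≠ g ^ 2) : h = g⁻¹ := by
  obtain ⟨k, hk⟩ := mem_zpowers_iff.mp hh
  have h4 : g ^ (4:ℕ) = 1 := by rw [← hg]; exact pow_orderOf_eq_one g
  have hmod : g ^ (k % 4) = h := by
    rw [← hk]
    have := zpow_mod_orderOf g k
    rwa [hg] at this
  have hr0 : 0 ≤ k % 4 := Int.emod_nonneg k (by norm_num)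
  have hr4 : k % 4 < 4 := Int.emod_lt_of_pos k (by norm_num)
  set r := k % 4 with hrdef
  interval_cases r
  · simp at hmod; exact absurd hmod.symm h1
  · simp at hmod; exact absurd hmod.symm h2
  · rw [show ((2:ℤ)) = ((2:ℕ):ℤ) by norm_num, zpow_natCast] at hmod
    exact absurd hmod.symm h3
  · rw [show ((3:ℤ)) = ((3:ℕ):ℤ) by norm_num, zpow_natCast] at hmod
    rw [← hmod]
    apply eq_inv_of_mul_eq_one_left
    rw [← pow_succ]
    exact h4


/-- Removing the identity and the unique involution `z` from the power graph of the
generalized quaternion group `Q_{2^n}` (`n ≥ 3`) leaves the disjoint union of a complete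
graph on the `2^(n-1) - 2` remaining elements of a cyclic subgroup `C` of index `2`,
together with `2^(n-2)` disjoint edges, each joining an element of order `4` outside
`C` to its inverse. -/
theorem power_graph_quaternion_delete_center
    (n : ℕ) (hn : 3 ≤ n)
    (z : QuaternionGroup (2 ^ (n - 2))) (hz : orderOf z = 2)
    (C : Subgroup (QuaternionGroup (2 ^ (n - 2)))) (hC2 : C.index = 2) (hCcyc : IsCyclic ↥C) :
    -- the remaining elements of C form a complete graph on 2^(n-1) - 2 vertices
    (∀ g ∈ ({g | g ≠ 1 ∧ g ≠ z} ∩ ↑C : Set (QuaternionGroup (2 ^ (n - 2)))),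
      ∀ h ∈ ({g | g ≠ 1 ∧ g ≠ z} ∩ ↑C : Set (QuaternionGroup (2 ^ (n - 2)))),
        g ≠ h → (powerGraph (QuaternionGroup (2 ^ (n - 2)))).Adj g h) ∧
    Set.ncard ({g | g ≠ 1 ∧ g ≠ z} ∩ ↑C : Set (QuaternionGroup (2 ^ (n - 2))))
      = 2 ^ (n - 1) - 2 ∧
    -- the 2 * 2^(n-2) elements outside C pair up into 2^(n-2) disjoint edges
    Set.ncard ({g | g ∉ C} : Set (QuaternionGroup (2 ^ (n - 2)))) = 2 * 2 ^ (n - 2) ∧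
    (∀ g : QuaternionGroup (2 ^ (n - 2)), g ∉ C →
      (g ≠ 1 ∧ g ≠ z) ∧ orderOf g = 4 ∧ g⁻¹ ≠ g ∧ g⁻¹ ∉ C ∧
      (powerGraph (QuaternionGroup (2 ^ (n - 2)))).Adj g g⁻¹ ∧
      ∀ h : QuaternionGroup (2 ^ (n - 2)), h ≠ 1 → h ≠ z →
        (powerGraph (QuaternionGroup (2 ^ (n - 2)))).Adj g h → h = g⁻¹) := by
  have hMpos : 0 < 2 ^ (n - 2) := pow_pos (by norm_num) _
  haveI : NeZero (2 ^ (n - 2)) := ⟨hMpos.ne'⟩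
  have hpow : 2 ^ (n - 1) = 2 * 2 ^ (n - 2) := by
    rw [show n - 1 = (n - 2) + 1 by omega, pow_succ]; ring
  have hcardG : Nat.card (QuaternionGroup (2 ^ (n - 2))) = 4 * 2 ^ (n - 2) := by
    rw [Nat.card_eq_fintype_card, QuaternionGroup.card]
  have hcardC : Nat.card ↥C = 2 * 2 ^ (n - 2) := by
    have := Subgroup.card_mul_index C
    rw [hC2, hcardG] at this
    omega
  obtain ⟨cc, hcc⟩ := hCcyc.exists_generator
  have hordc : orderOf ((cc : QuaternionGroup (2 ^ (n - 2)))) = 2 * 2 ^ (n - 2) := by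
    rw [show ((cc : QuaternionGroup (2 ^ (n - 2)))) = C.subtype cc from rfl,
      orderOf_injective C.subtype C.subtype_injective cc,
      orderOf_eq_card_of_forall_mem_zpowers hcc, hcardC]
  have hCzp : C = Subgroup.zpowers ((cc : QuaternionGroup (2 ^ (n - 2)))) := by
    apply le_antisymm
    · intro g hg
      obtain ⟨k, hk⟩ := Subgroup.mem_zpowers_iff.mp (hcc ⟨g, hg⟩)
      exact Subgroup.mem_zpowers_iff.mpr ⟨k, by simpa using congrArg Subtype.val hk⟩
    · exact Subgroup.zpowers_le.mpr cc.2
  have hmem_a : ∀ j : ZMod (2 * 2 ^ (n - 2)),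
      QuaternionGroup.a j ∈ Subgroup.zpowers
        (QuaternionGroup.a 1 : QuaternionGroup (2 ^ (n - 2))) := by
    intro j
    refine Subgroup.mem_zpowers_iff.mpr ⟨(j.val : ℤ), ?_⟩
    rw [zpow_natCast, QuaternionGroup.a_one_pow]
    congr 1
    rw [ZMod.natCast_val, ZMod.cast_id]
  have horda1 : orderOf (QuaternionGroup.a 1 : QuaternionGroup (2 ^ (n - 2)))
      = 2 * 2 ^ (n - 2) := QuaternionGroup.orderOf_a_one
  have hdich : C = Subgroup.zpowers (QuaternionGroup.a 1 : QuaternionGroup (2 ^ (n - 2)))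
      ∨ (2 * 2 ^ (n - 2) = 4 ∧ ∃ i, (cc : QuaternionGroup (2 ^ (n - 2))) = QuaternionGroup.xa i) := by
    cases hc : (cc : QuaternionGroup (2 ^ (n - 2))) with
    | a i =>
      left
      have hle : C ≤ Subgroup.zpowers (QuaternionGroup.a 1) := by
        rw [hCzp, hc]; exact Subgroup.zpowers_le.mpr (hmem_a i)
      exact Subgroup.eq_of_le_of_card_ge hle
        (by rw [Nat.card_zpowers, horda1, hcardC])
    | xa i =>
      right
      refine ⟨?_, i, rfl⟩
      rw [← hordc, hc]
      exact QuaternionGroup.orderOf_xa i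
  have hzam : z = QuaternionGroup.a ((2 ^ (n - 2) : ℕ) : ZMod (2 * 2 ^ (n - 2))) :=
    quaternion_orderOf_eq_two z hz
  have hzC : z ∈ C := by
    rcases hdich with h | ⟨h4, i, hci⟩
    · rw [h, hzam]; exact hmem_a _
    · rw [hzam, ← QuaternionGroup.xa_sq i, ← hci]
      exact pow_mem cc.2 2
  have hz1 : z ≠ 1 := by
    intro e; rw [e, orderOf_one] at hz; norm_num at hz
  -- key order lemma
  have hord_out_aux : ∀ h : QuaternionGroup (2 ^ (n - 2)), h ≠ 1 → h ≠ z →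
      (∃ g, g ∉ C ∧ g ∈ Subgroup.zpowers h) → orderOf h = 4 := by
    rintro h h1 hz' ⟨g, hgC, hgh⟩
    have hdvd4 : orderOf h ∣ 2 ^ 2 := by
      show orderOf h ∣ 4
      rcases hdich with hA | ⟨h4, _⟩
      · cases hh : h with
        | a j =>
          exfalso
          apply hgC
          rw [hA]
          exact Subgroup.zpowers_le.mpr (hmem_a j) (hh ▸ hgh)
        | xa j => simp [QuaternionGroup.orderOf_xa]
      · cases hh : h with
        | a j =>
          have hd : orderOf (QuaternionGroup.a j : QuaternionGroup (2 ^ (n - 2)))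
              ∣ 2 * 2 ^ (n - 2) := horda1 ▸ orderOf_dvd_of_mem_zpowers (hmem_a j)
          exact h4 ▸ hd
        | xa j => simp [QuaternionGroup.orderOf_xa]
    obtain ⟨s, hs, hval⟩ := (Nat.dvd_prime_pow Nat.prime_two).mp hdvd4
    interval_cases s
    · exact absurd (orderOf_eq_one_iff.mp (by rw [hval]; norm_num)) h1
    · exfalso
      apply hz'
      have := quaternion_orderOf_eq_two h (by rw [hval]; norm_num)
      rw [hzam]
      exact this
    · simpa using hval
  have hord_out : ∀ g, g ∉ C → orderOf g = 4 := fun g hg =>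
    hord_out_aux g (fun e => hg (e ▸ C.one_mem)) (fun e => hg (e ▸ hzC))
      ⟨g, hg, Subgroup.mem_zpowers g⟩
  refine ⟨?_, ?_, ?_, ?_⟩
  · -- clique
    rintro g ⟨⟨g1, gz⟩, hgC⟩ h ⟨⟨h1, hz'⟩, hhC⟩ hne
    refine ⟨hne, ?_⟩
    have hcomp := cyclic_two_group_comparable (H := ↥C) (k := n - 1)
      (by rw [hcardC, hpow]) ⟨g, hgC⟩ ⟨h, hhC⟩
    rcases hcomp with hm | hm
    · left
      obtain ⟨k, hk⟩ := Subgroup.mem_zpowers_iff.mp hm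
      exact Subgroup.mem_zpowers_iff.mpr ⟨k, by simpa using congrArg Subtype.val hk⟩
    · right
      obtain ⟨k, hk⟩ := Subgroup.mem_zpowers_iff.mp hm
      exact Subgroup.mem_zpowers_iff.mpr ⟨k, by simpa using congrArg Subtype.val hk⟩
  · -- card of C minus {1, z}
    have hSeq : ({g | g ≠ 1 ∧ g ≠ z} ∩ ↑C : Set (QuaternionGroup (2 ^ (n - 2))))
        = (↑C : Set (QuaternionGroup (2 ^ (n - 2)))) \ {1, z} := by
      ext x
      simp only [Set.mem_inter_iff, Set.mem_setOf_eq, Set.mem_diff, Set.mem_insert_iff,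
        Set.mem_singleton_iff, SetLike.mem_coe]
      tauto
    rw [hSeq, Set.ncard_diff]
    · rw [Set.ncard_pair (Ne.symm hz1)]
      have hCn : (↑C : Set (QuaternionGroup (2 ^ (n - 2)))).ncard = Nat.card ↥C := by
        rw [← Nat.card_coe_set_eq]; rfl
      rw [hCn, hcardC, hpow]
    · intro t ht
      rcases ht with rfl | ht
      · exact C.one_mem
      · rw [Set.mem_singleton_iff] at ht
        rw [ht]; exact hzC
  · -- card of complement
    have hceq : ({g | g ∉ C} : Set (QuaternionGroup (2 ^ (n - 2))))
        = (↑C : Set (QuaternionGroup (2 ^ (n - 2))))ᶜ := rfl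
    have hadd := Set.ncard_add_ncard_compl (↑C : Set (QuaternionGroup (2 ^ (n - 2))))
    have hCn : (↑C : Set (QuaternionGroup (2 ^ (n - 2)))).ncard = Nat.card ↥C := by
      rw [← Nat.card_coe_set_eq]; rfl
    rw [hceq]
    rw [hCn, hcardC, hcardG] at hadd
    omega
  · -- edges
    intro g hgC
    have g1 : g ≠ 1 := fun e => hgC (e ▸ C.one_mem)
    have gz : g ≠ z := fun e => hgC (e ▸ hzC)
    have og : orderOf g = 4 := hord_out g hgC
    have g2z : g ^ 2 = z := by
      have h2 : orderOf (g ^ 2) = 2 := by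
        rw [orderOf_pow, og]
        decide
      rw [hzam]
      exact quaternion_orderOf_eq_two _ h2
    have ginv : g⁻¹ ≠ g := by
      intro e
      have h2 : g ^ 2 = 1 := by
        rw [pow_two]
        nth_rewrite 2 [← e]
        exact mul_inv_cancel g
      have := orderOf_dvd_iff_pow_eq_one.mpr h2
      rw [og] at this
      norm_num at this
    have ginvC : g⁻¹ ∉ C := fun h => hgC (by simpa using C.inv_mem h)
    refine ⟨⟨g1, gz⟩, og, ginv, ginvC,
      ⟨fun e => ginv e.symm, Or.inr ((Subgroup.zpowers g).inv_mem (Subgroup.mem_zpowers g))⟩, ?_⟩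
    intro h h1 hz' hadj
    obtain ⟨hne, hcase⟩ := hadj
    have hgz2 : h ≠ g ^ 2 := by rw [g2z]; exact hz'
    rcases hcase with hm | hm
    · have oh : orderOf h = 4 := hord_out_aux h h1 hz' ⟨g, hgC, hm⟩
      have hmem : h ∈ Subgroup.zpowers g := mem_zpowers_flip (og.trans oh.symm) hm
      exact eq_inv_of_mem_zpowers_orderOf_four og hmem h1 (Ne.symm hne) hgz2
    · exact eq_inv_of_mem_zpowers_orderOf_four og hm h1 (Ne.symm hne) hgz2
end

section
/- Let G be a torsion-free group such that the proper power graph P*(G) is connected. Then for any two non-identity elements x, y ∈ G, the intersection ⟨x⟩ ∩ ⟨y⟩ is nontrivial. -/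
private lemma edge_aux {G : Type*} [Group G] {x y : G} (hx : x ≠ 1) (hy : y ≠ 1)
    (h : x ∈ Subgroup.zpowers y ∨ y ∈ Subgroup.zpowers x) :
    Subgroup.zpowers x ⊓ Subgroup.zpowers y ≠ ⊥ := by
  rw [Subgroup.ne_bot_iff_exists_ne_one]
  rcases h with h | h
  · exact ⟨⟨x, Subgroup.mem_inf.mpr ⟨Subgroup.mem_zpowers x, h⟩⟩,
      fun e => hx (by simpa using congrArg Subtype.val e)⟩
  · exact ⟨⟨y, Subgroup.mem_inf.mpr ⟨h, Subgroup.mem_zpowers y⟩⟩,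
      fun e => hy (by simpa using congrArg Subtype.val e)⟩

private lemma trans_aux {G : Type*} [Group G]
    (htf : ∀ g : G, g ≠ 1 → ¬ IsOfFinOrder g) {x y z : G} (hx : x ≠ 1)
    (h1 : Subgroup.zpowers x ⊓ Subgroup.zpowers y ≠ ⊥)
    (h2 : Subgroup.zpowers y ⊓ Subgroup.zpowers z ≠ ⊥) :
    Subgroup.zpowers x ⊓ Subgroup.zpowers z ≠ ⊥ := by
  rw [Subgroup.ne_bot_iff_exists_ne_one] at h1 h2 ⊢
  obtain ⟨⟨a, ha⟩, ha1⟩ := h1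
  obtain ⟨⟨b, hb⟩, hb1⟩ := h2
  have ha1' : a ≠ 1 := fun e => ha1 (Subtype.ext e)
  have hb1' : b ≠ 1 := fun e => hb1 (Subtype.ext e)
  obtain ⟨hax, hay⟩ := Subgroup.mem_inf.mp ha
  obtain ⟨hby, hbz⟩ := Subgroup.mem_inf.mp hb
  obtain ⟨m, hm⟩ := Subgroup.mem_zpowers_iff.mp hax
  obtain ⟨n, hn⟩ := Subgroup.mem_zpowers_iff.mp hay
  obtain ⟨p, hp⟩ := Subgroup.mem_zpowers_iff.mp hby
  obtain ⟨q, hq⟩ := Subgroup.mem_zpowers_iff.mp hbz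
  have hm0 : m ≠ 0 := by rintro rfl; exact ha1' (hm.symm.trans (zpow_zero x))
  have hp0 : p ≠ 0 := by rintro rfl; exact hb1' (hp.symm.trans (zpow_zero y))
  have hcx : a ^ p ∈ Subgroup.zpowers x := by
    rw [← hm, ← zpow_mul]; exact Subgroup.mem_zpowers_iff.mpr ⟨m * p, rfl⟩
  have hab : a ^ p = b ^ n := by
    rw [← hn, ← hp, ← zpow_mul, ← zpow_mul, mul_comm]
  have hcz : a ^ p ∈ Subgroup.zpowers z := by
    rw [hab, ← hq, ← zpow_mul]; exact Subgroup.mem_zpowers_iff.mpr ⟨q * n, rfl⟩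
  have hc1 : a ^ p ≠ 1 := by
    intro e
    rw [← hm, ← zpow_mul] at e
    exact htf x hx (isOfFinOrder_iff_zpow_eq_one.mpr ⟨m * p, mul_ne_zero hm0 hp0, e⟩)
  exact ⟨⟨a ^ p, Subgroup.mem_inf.mpr ⟨hcx, hcz⟩⟩, fun e => hc1 (Subtype.ext_iff.mp e)⟩

/-- If `G` is torsion-free and its proper power graph is connected, then any two
nontrivial cyclic subgroups intersect nontrivially. -/
theorem zpowers_inter_nontrivial_of_proper_power_graph_connected
    (G : Type*) [Group G]
    (htf : ∀ g : G, g ≠ 1 → ¬ IsOfFinOrder g)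
    (h : ((powerGraph G).induce {g : G | g ≠ 1}).Connected) :
    ∀ x y : G, x ≠ 1 → y ≠ 1 →
      Subgroup.zpowers x ⊓ Subgroup.zpowers y ≠ ⊥ := by
  suffices key : ∀ a b : {g : G | g ≠ 1},
      ((powerGraph G).induce {g : G | g ≠ 1}).Walk a b →
      Subgroup.zpowers (a : G) ⊓ Subgroup.zpowers (b : G) ≠ ⊥ by
    intro x y hx hy
    obtain ⟨w⟩ := h.preconnected ⟨x, hx⟩ ⟨y, hy⟩
    exact key _ _ w
  intro a b w
  induction w with
  | @nil u =>
    exact edge_aux u.2 u.2 (Or.inl (Subgroup.mem_zpowers _))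
  | @cons u v b' hadj w ih =>
    exact trans_aux htf u.2 (edge_aux u.2 v.2 (show (u : G) ≠ v ∧ ((u : G) ∈ Subgroup.zpowers (v : G) ∨ (v : G) ∈ Subgroup.zpowers (u : G)) from hadj).2) ih
end

section
/- Let G be a torsion-free group that is locally center-by-finite, i.e. every finitely generated subgroup H of G has center of finite index in H. If the proper power graph P*(G) is connected, then G is abelian. -/
/-- A torsion-free, locally center-by-finite group with connected proper power graph
is abelian. -/
theorem abelian_of_proper_power_graph_connected
    (G : Type*) [Group G]
    (htf : ∀ g : G, g ≠ 1 → ¬ IsOfFinOrder g)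
    (hlcf : ∀ H : Subgroup G, H.FG → (Subgroup.center ↥H).FiniteIndex)
    (h : ((powerGraph G).induce {g : G | g ≠ 1}).Connected) :
    ∀ a b : G, a * b = b * a := by
  classical
  intro a b
  -- Work in the finitely generated subgroup H = ⟨a, b⟩.
  set H : Subgroup G := Subgroup.closure {a, b} with hH
  have hfg : H.FG := ⟨({a, b} : Finset G), by simp [hH]⟩
  haveI : (Subgroup.center ↥H).FiniteIndex := hlcf H hfg
  -- H is abelian via the transfer homomorphism g ↦ g ^ [H : Z(H)] into Z(H).
  have key : ∀ x y : ↥H, x * y = y * x := by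
    intro x y
    have hinj : Function.Injective (MonoidHom.transferCenterPow ↥H) := by
      rw [injective_iff_map_eq_one]
      intro u hu
      have h0 : u ^ (Subgroup.center ↥H).index = (1 : ↥H) := by
        have h2 := MonoidHom.transferCenterPow_apply (G := ↥H) u
        rw [hu] at h2
        exact h2.symm
      have h1 : (u : G) ^ (Subgroup.center ↥H).index = 1 := by
        have := congrArg (fun z : ↥H => (z : G)) h0
        push_cast at this
        exact this
      by_contra hne
      have hune : (u : G) ≠ 1 := by
        intro hc
        exact hne (Subtype.ext hc)
      exact htf (u : G) hune (isOfFinOrder_iff_pow_eq_one.mpr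
        ⟨(Subgroup.center ↥H).index,
         Nat.pos_of_ne_zero Subgroup.FiniteIndex.index_ne_zero, h1⟩)
    have hcomm : (MonoidHom.transferCenterPow ↥H) (x * y) =
        (MonoidHom.transferCenterPow ↥H) (y * x) := by
      rw [map_mul, map_mul]; exact Subtype.ext (Subgroup.mem_center_iff.mp ((MonoidHom.transferCenterPow ↥H) y).2 _)
    exact hinj hcomm
  have ha : a ∈ H := Subgroup.subset_closure (by simp)
  have hb : b ∈ H := Subgroup.subset_closure (by simp)
  simpa using congrArg Subtype.val (key ⟨a, ha⟩ ⟨b, hb⟩)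
end

section
/- Let G be a periodic group (every element has finite order) whose center Z(G) contains elements of two distinct prime orders p and q. Then the proper power graph P*(G) is connected. -/
lemma mem_zpowers_mul_of_coprime {G : Type*} [Group G] {a b : G} (hc : Commute a b)
    (hcop : Nat.Coprime (orderOf a) (orderOf b)) :
    a ∈ Subgroup.zpowers (a * b) := by
  obtain ⟨k, hk1, hk2⟩ := Nat.chineseRemainder hcop 1 0
  refine Subgroup.mem_zpowers_iff.mpr ⟨(k : ℤ), ?_⟩
  show (a * b) ^ ((k : ℕ) : ℤ) = a
  rw [zpow_natCast, hc.mul_pow]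
  have h1 : a ^ (k : ℕ) = a := by
    rw [← pow_mod_orderOf, hk1, pow_mod_orderOf, pow_one]
  have h2 : b ^ (k : ℕ) = 1 := by
    rw [← pow_mod_orderOf, hk2, pow_mod_orderOf, pow_zero]
  rw [h1, h2, mul_one]

lemma reach_mul {G : Type*} [Group G] {a b : G} (ha : a ≠ 1) (hb : b ≠ 1)
    (hc : Commute a b)
    (hcop : Nat.Coprime (orderOf a) (orderOf b)) :
    ((powerGraph G).induce {g : G | g ≠ 1}).Reachable ⟨a, ha⟩ ⟨b, hb⟩ := by
  have hab : a * b ≠ 1 := by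
    intro h
    have hb' : b = a⁻¹ := by rw [eq_inv_iff_mul_eq_one, ← hc.eq]; exact h
    rw [hb', orderOf_inv] at hcop
    have : orderOf a = 1 := (Nat.coprime_self _).mp hcop
    exact ha (orderOf_eq_one_iff.mp this)
  have hma : a ∈ Subgroup.zpowers (a * b) := mem_zpowers_mul_of_coprime hc hcop
  have hmb : b ∈ Subgroup.zpowers (a * b) := by
    rw [hc.eq]
    exact mem_zpowers_mul_of_coprime hc.symm hcop.symm
  have h1 : ((powerGraph G).induce {g : G | g ≠ 1}).Adj ⟨a, ha⟩ ⟨a * b, hab⟩ := by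
    show (powerGraph G).Adj a (a * b)
    exact ⟨fun h => hb (left_eq_mul.mp h), Or.inl hma⟩
  have h2 : ((powerGraph G).induce {g : G | g ≠ 1}).Adj ⟨a * b, hab⟩ ⟨b, hb⟩ := by
    show (powerGraph G).Adj (a * b) b
    exact ⟨fun h => ha (mul_eq_right.mp h), Or.inr hmb⟩
  exact h1.reachable.trans h2.reachable

/-- If `G` is periodic and its center contains elements of two distinct prime orders,
then the proper power graph of `G` is connected. -/
theorem proper_power_graph_connected_of_center_two_primes
    (G : Type*) [Group G]
    (hper : ∀ g : G, IsOfFinOrder g)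
    (p q : ℕ) (hp : p.Prime) (hq : q.Prime) (hpq : p ≠ q)
    (x y : G) (hx : x ∈ Subgroup.center G) (hy : y ∈ Subgroup.center G)
    (hxo : orderOf x = p) (hyo : orderOf y = q) :
    ((powerGraph G).induce {g : G | g ≠ 1}).Connected := by
  set H := (powerGraph G).induce {g : G | g ≠ 1} with hH
  have hx1 : x ≠ 1 := by
    intro h; rw [h, orderOf_one] at hxo; exact hp.one_lt.ne' hxo.symm
  have hy1 : y ≠ 1 := by
    intro h; rw [h, orderOf_one] at hyo; exact hq.one_lt.ne' hyo.symm
  have hxy : H.Reachable ⟨x, hx1⟩ ⟨y, hy1⟩ := by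
    apply reach_mul hx1 hy1 (Subgroup.mem_center_iff.mp hy x : Commute x y)
    rw [hxo, hyo]
    exact (Nat.coprime_primes hp hq).mpr hpq
  have key : ∀ (g : G) (hg : g ≠ 1), H.Reachable ⟨g, hg⟩ ⟨x, hx1⟩ := by
    intro g hg
    set d := orderOf g with hd
    have hd0 : d ≠ 0 := (hper g).orderOf_pos.ne'
    have hdne1 : d ≠ 1 := fun h => hg (orderOf_eq_one_iff.mp h)
    have hd1 : 1 < d := by omega
    have hr : d.minFac.Prime := Nat.minFac_prime hdne1
    set r := d.minFac with hrdef
    have hrd : r ∣ d := Nat.minFac_dvd d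
    set h0 : G := g ^ (d / r) with hh0
    have hdr0 : d / r ≠ 0 := by
      intro h
      have := Nat.div_mul_cancel hrd
      rw [h, zero_mul] at this
      exact hd0 this.symm
    have hor : orderOf h0 = r := by
      rw [hh0, orderOf_pow' g hdr0]
      rw [Nat.gcd_eq_right (Nat.div_dvd_of_dvd hrd)]
      rw [← hd, Nat.div_div_self hrd hd0]
    have hh1 : h0 ≠ 1 := by
      intro h
      rw [h, orderOf_one] at hor
      exact hr.one_lt.ne hor
    have hreach0 : H.Reachable ⟨g, hg⟩ ⟨h0, hh1⟩ := by
      by_cases heq : g = h0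
      · exact (Subtype.ext heq : (⟨g, hg⟩ : {g : G | g ≠ 1}) = ⟨h0, hh1⟩) ▸
          SimpleGraph.Reachable.refl _
      · refine SimpleGraph.Adj.reachable ?_
        show (powerGraph G).Adj g h0
        refine ⟨heq, Or.inr (Subgroup.mem_zpowers_iff.mpr ⟨((d / r : ℕ) : ℤ), ?_⟩)⟩
        rw [zpow_natCast]
    by_cases hrp : r = p
    · have h1 : H.Reachable ⟨h0, hh1⟩ ⟨y, hy1⟩ := by
        apply reach_mul hh1 hy1 (Subgroup.mem_center_iff.mp hy h0 : Commute h0 y)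
        rw [hor, hyo, hrp]
        exact (Nat.coprime_primes hp hq).mpr hpq
      exact hreach0.trans (h1.trans hxy.symm)
    · have h1 : H.Reachable ⟨h0, hh1⟩ ⟨x, hx1⟩ := by
        apply reach_mul hh1 hx1 (Subgroup.mem_center_iff.mp hx h0 : Commute h0 x)
        rw [hor, hxo]
        exact (Nat.coprime_primes hr hp).mpr hrp
      exact hreach0.trans h1
  have : Nonempty {g : G | g ≠ 1} := ⟨⟨x, hx1⟩⟩
  exact ⟨fun u v => (key u u.2).trans (key v v.2).symm⟩
end

section
/- Let p be a prime and let G be a nontrivial p-group, i.e. a group in which every element has order a power of p. Then the proper power graph P*(G) is connected if and only if G has exactly one subgroup of order p. -/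
section Aux

variable {p : ℕ} {G : Type*} [Group G]

/-- In a `p`-group, `x ^ (orderOf x / p)` has order `p` for any `x ≠ 1`. -/
lemma aux_orderOf (hp : p.Prime) (hG : IsPGroup p G) {x : G} (hx : x ≠ 1) :
    orderOf (x ^ (orderOf x / p)) = p := by
  haveI : Fact p.Prime := ⟨hp⟩
  obtain ⟨k, hk⟩ := IsPGroup.iff_orderOf.mp hG x
  have hk0 : k ≠ 0 := by
    rintro rfl
    exact hx (orderOf_eq_one_iff.mp (by simpa using hk))
  have hdiv : orderOf x / p = p ^ (k - 1) := by
    have h : p ^ k = p ^ (k - 1) * p := by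
      rw [← pow_succ]; congr 1; omega
    rw [hk, h, Nat.mul_div_cancel _ hp.pos]
  set y := x ^ (orderOf x / p) with hy
  have hyp : y ^ p = 1 := by
    rw [hy, hdiv, ← pow_mul, ← pow_succ, Nat.sub_add_cancel (by omega), ← hk,
      pow_orderOf_eq_one]
  have hy1 : y ≠ 1 := by
    intro h
    have : orderOf x ∣ p ^ (k - 1) := by
      rw [hy, hdiv] at h
      exact orderOf_dvd_of_pow_eq_one h
    rw [hk, Nat.pow_dvd_pow_iff_le_right hp.one_lt] at this
    omega
  have := orderOf_dvd_of_pow_eq_one hyp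
  rcases (Nat.dvd_prime hp).mp this with h | h
  · exact absurd (orderOf_eq_one_iff.mp h) hy1
  · exact h

/-- If `z ∈ ⟨x⟩` has order `p`, then `⟨z⟩` is the unique order-`p` subgroup of `⟨x⟩`. -/
lemma aux_zpowers_eq (hp : p.Prime) (hG : IsPGroup p G) {x z : G}
    (hz : z ∈ Subgroup.zpowers x) (hz1 : z ≠ 1) (hzp : z ^ p = 1) :
    Subgroup.zpowers z = Subgroup.zpowers (x ^ (orderOf x / p)) := by
  haveI : Fact p.Prime := ⟨hp⟩
  have hx : x ≠ 1 := by
    rintro rfl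
    rw [Subgroup.zpowers_one_eq_bot, Subgroup.mem_bot] at hz
    exact hz1 hz
  obtain ⟨k, hk⟩ := IsPGroup.iff_orderOf.mp hG x
  have hk0 : k ≠ 0 := by
    rintro rfl
    exact hx (orderOf_eq_one_iff.mp (by simpa using hk))
  have hdiv : orderOf x / p = p ^ (k - 1) := by
    have h : p ^ k = p ^ (k - 1) * p := by
      rw [← pow_succ]; congr 1; omega
    rw [hk, h, Nat.mul_div_cancel _ hp.pos]
  obtain ⟨m, rfl⟩ := Subgroup.mem_zpowers_iff.mp hz
  -- (orderOf x : ℤ) ∣ m * p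
  have h1 : x ^ (m * (p : ℤ)) = 1 := by
    rw [zpow_mul, zpow_natCast]; exact hzp
  have h2 : ((p : ℤ) ^ k) ∣ m * (p : ℤ) := by
    have := orderOf_dvd_iff_zpow_eq_one.mpr h1
    rwa [hk, Nat.cast_pow] at this
  have h3 : ((p : ℤ) ^ (k - 1)) ∣ m := by
    have hpe : (p : ℤ) ^ (k - 1) * (p : ℤ) = (p : ℤ) ^ k := by
      rw [← pow_succ, Nat.sub_add_cancel (by omega)]
    have : (p : ℤ) ^ (k - 1) * (p : ℤ) ∣ m * (p : ℤ) := by rw [hpe]; exact h2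
    exact (mul_dvd_mul_iff_right (by exact_mod_cast hp.ne_zero)).mp this
  obtain ⟨c, rfl⟩ := h3
  have hmem : x ^ ((p : ℤ) ^ (k - 1) * c) ∈ Subgroup.zpowers (x ^ (orderOf x / p)) := by
    rw [hdiv, zpow_mul]
    have : x ^ ((p : ℤ) ^ (k - 1)) = x ^ (p ^ (k - 1)) := by
      rw [← zpow_natCast, Nat.cast_pow]
    rw [this]
    exact Subgroup.zpow_mem _ (Subgroup.mem_zpowers _) c
  have hle : Subgroup.zpowers (x ^ ((p : ℤ) ^ (k - 1) * c)) ≤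
      Subgroup.zpowers (x ^ (orderOf x / p)) := Subgroup.zpowers_le.mpr hmem
  have hcard1 : Nat.card (Subgroup.zpowers (x ^ ((p : ℤ) ^ (k - 1) * c))) = p := by
    rw [Nat.card_zpowers]
    rcases (Nat.dvd_prime hp).mp (orderOf_dvd_of_pow_eq_one hzp) with h | h
    · exact absurd (orderOf_eq_one_iff.mp h) hz1
    · exact h
  have hcard2 : Nat.card (Subgroup.zpowers (x ^ (orderOf x / p))) = p := by
    rw [Nat.card_zpowers, aux_orderOf hp hG hx]
  haveI : Finite (Subgroup.zpowers (x ^ (orderOf x / p))) :=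
    (Nat.card_ne_zero.mp (by rw [hcard2]; exact hp.ne_zero)).2
  exact Subgroup.eq_of_le_of_card_ge hle (by rw [hcard1, hcard2])

/-- The order-`p` subgroup invariant is constant along edges of the power graph. -/
lemma aux_F_eq_of_mem (hp : p.Prime) (hG : IsPGroup p G) {x y : G} (hy : y ≠ 1)
    (h : y ∈ Subgroup.zpowers x) :
    Subgroup.zpowers (y ^ (orderOf y / p)) = Subgroup.zpowers (x ^ (orderOf x / p)) := by
  apply aux_zpowers_eq hp hG
  · exact (Subgroup.zpowers_le.mpr h)
      (Subgroup.pow_mem _ (Subgroup.mem_zpowers y) _)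
  · intro h1
    have := aux_orderOf hp hG hy
    rw [h1, orderOf_one] at this
    exact hp.one_lt.ne' this.symm
  · have h2 : (y ^ (orderOf y / p)) ^ orderOf (y ^ (orderOf y / p)) = 1 :=
      pow_orderOf_eq_one _
    rwa [aux_orderOf hp hG hy] at h2

end Aux

/-- For a nontrivial `p`-group `G`, the proper power graph is connected iff `G` has
exactly one subgroup of order `p`. -/
theorem proper_power_graph_connected_iff_unique_subgroup_of_order_p
    (p : ℕ) (hp : p.Prime) (G : Type*) [Group G] [Nontrivial G]
    (hG : IsPGroup p G) :
    ((powerGraph G).induce {g : G | g ≠ 1}).Connected ↔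
      ∃! K : Subgroup G, Nat.card ↥K = p := by
  haveI : Fact p.Prime := ⟨hp⟩
  -- the invariant
  set F : G → Subgroup G := fun g => Subgroup.zpowers (g ^ (orderOf g / p)) with hF
  have hFcard : ∀ g : G, g ≠ 1 → Nat.card (F g) = p := fun g hg => by
    rw [hF, Nat.card_zpowers, aux_orderOf hp hG hg]
  -- any subgroup of order p is zpowers of some z ≠ 1, and equals F z
  have hgen : ∀ K : Subgroup G, Nat.card ↥K = p →
      ∃ z : G, z ≠ 1 ∧ Subgroup.zpowers z = K ∧ F z = K := by
    intro K hK
    haveI : Finite K := (Nat.card_ne_zero.mp (by rw [hK]; exact hp.ne_zero)).2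
    haveI : Nontrivial K := Finite.one_lt_card_iff_nontrivial.mp (by rw [hK]; exact hp.one_lt)
    obtain ⟨⟨z, hzK⟩, hz1⟩ := exists_ne (1 : K)
    have hz1' : z ≠ 1 := fun h => hz1 (Subtype.ext h)
    have hle : Subgroup.zpowers z ≤ K := Subgroup.zpowers_le.mpr hzK
    have horder : orderOf z = p := by
      have hd : Nat.card (Subgroup.zpowers z) ∣ Nat.card K := Subgroup.card_dvd_of_le hle
      rw [Nat.card_zpowers, hK] at hd
      rcases (Nat.dvd_prime hp).mp hd with h | h
      · exact absurd (orderOf_eq_one_iff.mp h) hz1'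
      · exact h
    have heq : Subgroup.zpowers z = K :=
      Subgroup.eq_of_le_of_card_ge hle (by rw [hK, Nat.card_zpowers, horder])
    refine ⟨z, hz1', heq, ?_⟩
    rw [hF]
    simp only [horder, Nat.div_self hp.pos, pow_one]
    exact heq
  -- F is constant along reachability in the induced graph
  have hFreach : ∀ a b : {g : G | g ≠ 1},
      ((powerGraph G).induce {g : G | g ≠ 1}).Reachable a b → F a.1 = F b.1 := by
    intro a b h
    obtain ⟨w⟩ := h
    induction w with
    | nil => rfl
    | @cons a b c hadj w ih =>
      refine Eq.trans ?_ ih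
      have hadj' : (powerGraph G).Adj a.1 b.1 := hadj
      obtain ⟨hne, hmem | hmem⟩ := hadj'
      · exact aux_F_eq_of_mem hp hG a.2 hmem
      · exact (aux_F_eq_of_mem hp hG b.2 hmem).symm
  constructor
  · rintro hconn
    obtain ⟨g, hg⟩ := exists_ne (1 : G)
    refine ⟨F g, hFcard g hg, ?_⟩
    intro K hK
    obtain ⟨z, hz1, _, hFz⟩ := hgen K hK
    have : ((powerGraph G).induce {g : G | g ≠ 1}).Reachable ⟨z, hz1⟩ ⟨g, hg⟩ :=
      hconn ⟨z, hz1⟩ ⟨g, hg⟩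
    rw [← hFz]
    exact hFreach _ _ this
  · rintro ⟨K, hK, huniq⟩
    obtain ⟨z, hz1, hzK, _⟩ := hgen K hK
    -- hub : every vertex is adjacent (or equal) to z
    have hub : ∀ a : {g : G | g ≠ 1},
        ((powerGraph G).induce {g : G | g ≠ 1}).Reachable a ⟨z, hz1⟩ := by
      intro ⟨x, hx⟩
      by_cases hxz : x = z
      · subst hxz; rfl
      · have hFx : F x = K := huniq (F x) (hFcard x hx)
        have hzmem : z ∈ Subgroup.zpowers x := by
          have h1 : z ∈ F x := by rw [hFx, ← hzK]; exact Subgroup.mem_zpowers z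
          have h2 : Subgroup.zpowers (x ^ (orderOf x / p)) ≤ Subgroup.zpowers x :=
            Subgroup.zpowers_le.mpr (Subgroup.pow_mem _ (Subgroup.mem_zpowers x) _)
          rw [hF] at h1
          exact h2 h1
        refine SimpleGraph.Adj.reachable ?_
        exact ⟨hxz, Or.inr hzmem⟩
    rw [SimpleGraph.connected_iff_exists_forall_reachable]
    exact ⟨⟨z, hz1⟩, fun a => (hub a).symm⟩
end
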